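/- For B_k the k-fold iterated wreath product of C_2 (k ≥ 1), the square of every element of B_k lies in the commutator subgroup B_k'; consequently B_k^2 ⊆ B_k', and since also B_k' ⊆ B_k^2 always holds (for the subgroup generated by squares), the subgroup generated by squares of B_k equals B_k'. -/

import Mathlib

/-- The cyclic shift action of `C_p = ZMod p` on the direct power `B^p`. -/
def cycShift (B : Type*) [Group B] (p : ℕ) :
    Multiplicative (ZMod p) →* MulAut (ZMod p → B) where
  toFun k := MulEquiv.arrowCongr (Equiv.addRight (Multiplicative.toAdd k)) (MulEquiv.refl B)
  map_one' := by
    ext f i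
    simp [MulEquiv.arrowCongr]
    rfl
  map_mul' a b := by
    ext f i
    simp only [MulEquiv.arrowCongr, Equiv.coe_addRight, MulEquiv.coe_mk, Equiv.coe_fn_mk,
      MulEquiv.refl_apply, toAdd_mul, MulAut.mul_apply]
    congr 1
    simp only [Equiv.addRight_symm, Equiv.coe_addRight]
    abel

/-- The permutational wreath product `B ≀ C_p` with `C_p` acting on `p` points by cyclic shift. -/
abbrev Wr (B : Type*) [Group B] (p : ℕ) : Type _ :=
  (ZMod p → B) ⋊[cycShift B p] Multiplicative (ZMod p)

/-- `BBgrp k` is the group `B_{k+1}`, the `(k+1)`-fold iterated wreath product of `C_2`: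
`BBgrp 0 = C_2` and `BBgrp (k+1) = BBgrp k ≀ C_2`.  It is (isomorphic to) a Sylow
2-subgroup of `S_{2^(k+1)}`. -/
def BBgrp : ℕ → GrpCat
  | 0 => GrpCat.of (Multiplicative (ZMod 2))
  | k + 1 => GrpCat.of (Wr (BBgrp k) 2)

/-- `GGset k` is the subset `G_{k+1}` of `B_{k+1} = BBgrp k`: `GGset 0 = {1}` and
`GGset (k+1) = {(g₁,g₂)π : g₁ * g₂ ∈ GGset k}`. -/
def GGset : (k : ℕ) → Set (BBgrp k)
  | 0 => {1}
  | k + 1 => {x : Wr (BBgrp k) 2 | x.left 0 * x.left 1 ∈ GGset k}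

open scoped commutatorElement

section Helpers

variable {G : Type*} [Group G]

lemma mem_commutator_iff_ab (x : G) :
    x ∈ commutator G ↔ Abelianization.of x = 1 := by
  rw [← QuotientGroup.eq_one_iff (x := x)]
  rfl

lemma commutator_mem_closure_sq (g h : G) :
    ⁅g, h⁆ ∈ Subgroup.closure {x : G | ∃ g : G, x = g ^ 2} := by
  have key : ⁅g, h⁆ = (g * h) ^ 2 * (h⁻¹ * g⁻¹ * h) ^ 2 * (h⁻¹) ^ 2 := by
    simp only [commutatorElement_def, pow_two, mul_assoc, mul_inv_cancel_left,
      inv_mul_cancel_left]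
  rw [key]
  have mem : ∀ a : G, a ^ 2 ∈ Subgroup.closure {x : G | ∃ g : G, x = g ^ 2} := fun a =>
    Subgroup.subset_closure ⟨a, rfl⟩
  exact Subgroup.mul_mem _ (Subgroup.mul_mem _ (mem _) (mem _)) (mem _)

lemma hom_mem_commutator {H : Type*} [Group H] (f : G →* H) {x : G}
    (hx : x ∈ commutator G) : f x ∈ commutator H := by
  have h1 : f x ∈ Subgroup.map f (commutator G) := Subgroup.mem_map_of_mem f hx
  refine SetLike.le_def.mp ?_ h1
  rw [commutator_def, Subgroup.map_commutator]
  exact Subgroup.commutator_mono le_top le_top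

end Helpers

section Wreath

variable {B : Type*} [Group B]

lemma cycShift_apply (t : Multiplicative (ZMod 2)) (f : ZMod 2 → B) (i : ZMod 2) :
    cycShift B 2 t f i = f (i - Multiplicative.toAdd t) := by
  show f ((Equiv.addRight (Multiplicative.toAdd t)).symm i) = _
  simp [Equiv.addRight_symm, sub_eq_add_neg]

lemma delta_mem_commutator (a : B) :
    (⟨fun i => if i = 0 then a else a⁻¹, 1⟩ : Wr B 2) ∈ commutator (Wr B 2) := by
  have key : (⟨fun i => if i = 0 then a else a⁻¹, 1⟩ : Wr B 2)
      = ⁅(⟨Pi.mulSingle 0 a, 1⟩ : Wr B 2), (⟨1, Multiplicative.ofAdd 1⟩ : Wr B 2)⁆ := by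
    refine SemidirectProduct.ext ?_ ?_
    · funext i
      rcases (show ∀ s : ZMod 2, s = 0 ∨ s = 1 by decide) i with rfl | rfl <;>
        simp [commutatorElement_def, SemidirectProduct.mul_left,
          SemidirectProduct.inv_left, SemidirectProduct.inv_right, cycShift_apply,
          Pi.mulSingle, Function.update, Pi.mul_apply, Pi.inv_apply, Function.update_apply]
    · simp [commutatorElement_def, SemidirectProduct.mul_right]
  rw [key, commutator_def]
  exact Subgroup.commutator_mem_commutator (Subgroup.mem_top _) (Subgroup.mem_top _)

lemma wr_mul_triv (u v : ZMod 2 → B) :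
    (⟨u, 1⟩ : Wr B 2) * ⟨v, 1⟩ = ⟨u * v, 1⟩ := by
  refine SemidirectProduct.ext ?_ ?_
  · show u * cycShift B 2 1 v = u * v
    rw [map_one]; rfl
  · exact mul_one 1

lemma base_mem_commutator {f : ZMod 2 → B} (hf : f 0 * f 1 ∈ commutator B) :
    (⟨f, 1⟩ : Wr B 2) ∈ commutator (Wr B 2) := by
  have hdecomp : (⟨f, 1⟩ : Wr B 2)
      = (⟨fun i => if i = 0 then f 0 else (f 0)⁻¹, 1⟩ : Wr B 2)
        * ⟨Pi.mulSingle 1 (f 0 * f 1), 1⟩ := by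
    rw [wr_mul_triv]
    refine SemidirectProduct.ext ?_ rfl
    funext i
    rcases (show ∀ s : ZMod 2, s = 0 ∨ s = 1 by decide) i with rfl | rfl <;>
      simp [Pi.mulSingle, Function.update, Pi.mul_apply, Function.update_apply]
  have hsingle : (⟨Pi.mulSingle 1 (f 0 * f 1), 1⟩ : Wr B 2)
      = (SemidirectProduct.inl.comp
          (MonoidHom.mulSingle (fun _ : ZMod 2 => B) 1)) (f 0 * f 1) := rfl
  rw [hdecomp, hsingle]
  exact Subgroup.mul_mem _ (delta_mem_commutator (f 0)) (hom_mem_commutator _ hf)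

end Wreath

/-- in `B_k` every square lies in the commutator subgroup, and hence the
subgroup generated by squares equals the commutator subgroup
(indexing: `BBgrp k` is `B_{k+1}`, `k ≥ 0`). -/
theorem BB_sq_eq_commutator (k : ℕ) :
    (∀ g : BBgrp k, g ^ 2 ∈ commutator (BBgrp k)) ∧
      Subgroup.closure {x : BBgrp k | ∃ g : BBgrp k, x = g ^ 2} = commutator (BBgrp k) := by
  have main : ∀ k : ℕ, ∀ g : BBgrp k, g ^ 2 ∈ commutator (BBgrp k) := by
    intro k
    induction k with
    | zero =>
      intro g
      have h0 : ∀ x : Multiplicative (ZMod 2), x ^ 2 = 1 := by decide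
      rw [show g ^ 2 = 1 from h0 g]
      exact Subgroup.one_mem _
    | succ k ih =>
      intro g
      show (g ^ 2 : Wr (BBgrp k) 2) ∈ commutator (Wr (BBgrp k) 2)
      have hsq : (g ^ 2 : Wr (BBgrp k) 2)
          = ⟨g.left * cycShift (BBgrp k) 2 g.right g.left, g.right * g.right⟩ := by
        exact (pow_two (M := Wr (BBgrp k) 2) g).trans rfl
      have h2 : ∀ r : Multiplicative (ZMod 2), r * r = 1 := by decide
      rw [hsq, h2]
      apply base_mem_commutator
      rw [mem_commutator_iff_ab]
      have hsqab : ∀ x y : BBgrp k,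
          Abelianization.of x * Abelianization.of x *
            (Abelianization.of y * Abelianization.of y) = 1 := by
        intro x y
        have hx := (mem_commutator_iff_ab ((x * y) ^ 2)).mp (ih (x * y))
        rw [mul_mul_mul_comm, ← map_mul, ← pow_two, ← map_pow]
        exact hx
      simp only [Pi.mul_apply, cycShift_apply, map_mul]
      set f := g.left with hfdef
      have hZ : ∀ s : ZMod 2, s = 0 ∨ s = 1 := by decide
      rcases hZ (Multiplicative.toAdd g.right) with ht | ht <;> rw [ht]
      · rw [show ((0 : ZMod 2) - 0) = 0 by decide, show ((1 : ZMod 2) - 0) = 1 by decide]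
        exact hsqab (f 0) (f 1)
      · rw [show ((0 : ZMod 2) - 1) = 1 by decide, show ((1 : ZMod 2) - 1) = 0 by decide]
        rw [mul_comm (Abelianization.of (f 1)) (Abelianization.of (f 0)),
          mul_mul_mul_comm]
        exact hsqab (f 0) (f 1)
  refine ⟨main k, le_antisymm ?_ ?_⟩
  · rw [Subgroup.closure_le]
    rintro x ⟨g, rfl⟩
    exact main k g
  · rw [commutator_def, Subgroup.commutator_le]
    intro g _ h _
    exact commutator_mem_closure_sq g h
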